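/- arXiv:2502.12868 — 4 statements merged into one kernel-verified Lean document; each statement's English description precedes it below -/
import Mathlib

section
/- Let A be a commutative noetherian local ring, B an A-algebra, and M a B-module that is finitely generated as an A-module. Then the Krull dimension of M as a B-module equals the Krull dimension of M as an A-module. -/
open Ideal

section General

variable {R S : Type*} [CommRing R] [CommRing S] [Algebra R S]

/-- Lifting chains of primes through an integral extension (going-up, chain version). -/
lemma exists_ltSeries_lift [Algebra.IsIntegral R S]
    (hinj : Function.Injective (algebraMap R S)) :
    ∀ (n : ℕ) (p : LTSeries (PrimeSpectrum R)), p.length = n →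
      ∃ q : LTSeries (PrimeSpectrum S), q.length = n ∧
        (q.last.asIdeal.comap (algebraMap R S)) = p.last.asIdeal := by
  intro n
  induction n with
  | zero =>
    intro p _
    have hker : RingHom.ker (algebraMap R S) ≤ p.last.asIdeal := by
      rw [(RingHom.injective_iff_ker_eq_bot _).1 hinj]
      exact bot_le
    obtain ⟨Q, -, hQprime, hQ⟩ :=
      Ideal.exists_ideal_over_prime_of_isIntegral p.last.asIdeal ⊥ hker
    exact ⟨RelSeries.singleton _ ⟨Q, hQprime⟩, rfl, hQ⟩
  | succ n ih =>
    intro p hp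
    have hne : p.length ≠ 0 := by omega
    obtain ⟨q, hqlen, hqlast⟩ := ih p.eraseLast (by simp [hp])
    have hlt : p.eraseLast.last < p.last := RelSeries.eraseLast_last_rel_last p hne
    have hle : q.last.asIdeal.comap (algebraMap R S) ≤ p.last.asIdeal := by
      rw [hqlast]; exact le_of_lt hlt
    obtain ⟨Q, hQge, hQprime, hQ⟩ :=
      Ideal.exists_ideal_over_prime_of_isIntegral p.last.asIdeal q.last.asIdeal hle
    have hstrict : q.last < (⟨Q, hQprime⟩ : PrimeSpectrum S) := by
      refine lt_of_le_of_ne hQge ?_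
      intro h
      apply ne_of_lt hlt
      have := congrArg (fun I : PrimeSpectrum S => I.asIdeal.comap (algebraMap R S)) h
      simp only at this
      rw [hqlast, hQ] at this
      exact PrimeSpectrum.ext this
    refine ⟨q.snoc ⟨Q, hQprime⟩ hstrict, by simp [hqlen], ?_⟩
    rw [RelSeries.last_snoc]
    exact hQ

/-- Krull dimension is preserved by injective integral ring extensions. -/
lemma ringKrullDim_eq_of_isIntegral [Algebra.IsIntegral R S]
    (hinj : Function.Injective (algebraMap R S)) :
    ringKrullDim S = ringKrullDim R := by
  apply le_antisymm
  · -- incomparability: comap is strictly monotone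
    apply Order.krullDim_le_of_strictMono
      (fun Q : PrimeSpectrum S => (⟨Q.asIdeal.comap (algebraMap R S), inferInstance⟩ :
        PrimeSpectrum R))
    intro I J hIJ
    obtain ⟨hle, x, hxJ, hxI⟩ := SetLike.lt_iff_le_and_exists.mp
      (show I.asIdeal < J.asIdeal from hIJ)
    exact Ideal.comap_lt_comap_of_integral_mem_sdiff hle ⟨hxJ, hxI⟩
      (Algebra.IsIntegral.isIntegral x)
  · -- going up: lift chains
    refine iSup_le fun p => ?_
    obtain ⟨q, hqlen, -⟩ := exists_ltSeries_lift hinj p.length p rfl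
    calc (p.length : WithBot (WithTop ℕ)) = q.length := by rw [hqlen]
    _ ≤ _ := le_iSup (fun r : LTSeries (PrimeSpectrum S) => (r.length : WithBot (WithTop ℕ))) q

end General

section Main

variable (A B M : Type*) [CommRing A] [CommRing B] [Algebra A B]
    [AddCommGroup M] [Module A M] [Module B M] [IsScalarTower A B M]
    [Module.Finite A M]

/-- The annihilator of `M` in `A` is the contraction of its annihilator in `B`. -/
lemma annihilator_eq_comap :
    Module.annihilator A M = (Module.annihilator B M).comap (algebraMap A B) := by
  ext a
  simp only [Ideal.mem_comap, Module.mem_annihilator]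
  refine forall_congr' fun m => ?_
  rw [algebraMap_smul]

/-- `B ⧸ Ann_B M` embeds into `End_A M` as an `A`-algebra. -/
noncomputable def quotToEnd : (B ⧸ Module.annihilator B M) →ₐ[A] Module.End A M :=
  Ideal.Quotient.liftₐ (Module.annihilator B M) (Algebra.lsmul A A M)
    (fun b hb => LinearMap.ext fun m => Module.mem_annihilator.mp hb m)

lemma quotToEnd_injective : Function.Injective (quotToEnd A B M) := by
  rw [injective_iff_map_eq_zero]
  intro x hx
  obtain ⟨b, rfl⟩ := Ideal.Quotient.mk_surjective x
  rw [Ideal.Quotient.eq_zero_iff_mem, Module.mem_annihilator]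
  intro m
  exact LinearMap.congr_fun hx m

instance : Algebra.IsIntegral A (B ⧸ Module.annihilator B M) :=
  Algebra.IsIntegral.of_injective (quotToEnd A B M) (quotToEnd_injective A B M)

end Main

/-- Let `A` be a commutative noetherian local ring, `B` an `A`-algebra,
and `M` a `B`-module that is finitely generated as an `A`-module.  Then the Krull
dimension of `M` as a `B`-module (i.e. the Krull dimension of `B ⧸ Ann_B M`) equals the
Krull dimension of `M` as an `A`-module (i.e. that of `A ⧸ Ann_A M`). -/
theorem dim_B_eq_dim_A (A B M : Type*) [CommRing A] [IsNoetherianRing A] [IsLocalRing A]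
    [CommRing B] [Algebra A B]
    [AddCommGroup M] [Module A M] [Module B M] [IsScalarTower A B M]
    [Module.Finite A M] :
    ringKrullDim (B ⧸ Module.annihilator B M) = ringKrullDim (A ⧸ Module.annihilator A M) := by
  rw [annihilator_eq_comap A B M]
  letI : Algebra (A ⧸ (Module.annihilator B M).comap (algebraMap A B))
      (B ⧸ Module.annihilator B M) := Ideal.quotientAlgebra
  have hinj : Function.Injective (algebraMap
      (A ⧸ (Module.annihilator B M).comap (algebraMap A B)) (B ⧸ Module.annihilator B M)) :=
    Ideal.quotientMap_injective
  have hint : Algebra.IsIntegral (A ⧸ (Module.annihilator B M).comap (algebraMap A B))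
      (B ⧸ Module.annihilator B M) := by
    constructor
    intro x
    obtain ⟨p, hmonic, heval⟩ := Algebra.IsIntegral.isIntegral (R := A) x
    refine ⟨p.map (Ideal.Quotient.mk _), hmonic.map _, ?_⟩
    rw [Polynomial.eval₂_map]
    convert heval using 2
    exact RingHom.ext fun a => rfl
  exact ringKrullDim_eq_of_isIntegral hinj
end

section
/- In the algebra W = A⟨s_1,...,s_p,t_1,...,t_p⟩/(s_i t_j + t_j s_i = δ_{ij}), for any monotone subsequence I = (i_1 < ⋯ < i_n) of (1,...,p), writing s_I = s_{i_1}⋯s_{i_n} and t_{I^op} = t_{i_n}⋯t_{i_1}, one has t_{I^op} s_I = Σ_{J ⊆ I} (−1)^{|J|} s_J t_{J^op}, the sum over all monotone subsequences J of I. -/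
/-- The defining relations of the "skew Weyl algebra"
`W = A⟨s₁,…,s_p,t₁,…,t_p⟩ / (sᵢtⱼ + tⱼsᵢ = δᵢⱼ)`:
`Sum.inl i` plays the role of `sᵢ` (degree `1`) and `Sum.inr j` that of `tⱼ`
(degree `-1`). -/
inductive WeylRel (A : Type*) [CommRing A] (p : ℕ) :
    FreeAlgebra A (Fin p ⊕ Fin p) → FreeAlgebra A (Fin p ⊕ Fin p) → Prop
  | rel (i j : Fin p) : WeylRel A p
      (FreeAlgebra.ι A (Sum.inl i) * FreeAlgebra.ι A (Sum.inr j)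
        + FreeAlgebra.ι A (Sum.inr j) * FreeAlgebra.ι A (Sum.inl i))
      (if i = j then 1 else 0)

/-- The skew Weyl algebra `W`. -/
abbrev SkewWeyl (A : Type*) [CommRing A] (p : ℕ) := RingQuot (WeylRel A p)

/-- The generator `sᵢ` of `W`. -/
noncomputable def Ws (A : Type*) [CommRing A] (p : ℕ) (i : Fin p) : SkewWeyl A p :=
  RingQuot.mkAlgHom A (WeylRel A p) (FreeAlgebra.ι A (Sum.inl i))

/-- The generator `tᵢ` of `W`. -/
noncomputable def Wt (A : Type*) [CommRing A] (p : ℕ) (i : Fin p) : SkewWeyl A p :=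
  RingQuot.mkAlgHom A (WeylRel A p) (FreeAlgebra.ι A (Sum.inr i))

/-- For a monotone subsequence `I = (i₁ < ⋯ < iₙ)` of `(1,…,p)` (encoded as a
`Finset`), the monomial `s_I = s_{i₁} ⋯ s_{iₙ}`. -/
noncomputable def sProd (A : Type*) [CommRing A] (p : ℕ) (I : Finset (Fin p)) : SkewWeyl A p :=
  ((I.sort (· ≤ ·)).map (Ws A p)).prod

/-- The monomial `t_{I^op} = t_{iₙ} ⋯ t_{i₁}` (indices in decreasing order). -/
noncomputable def tProdRev (A : Type*) [CommRing A] (p : ℕ) (I : Finset (Fin p)) : SkewWeyl A p :=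
  (((I.sort (· ≤ ·)).reverse).map (Wt A p)).prod

section AuxSection

variable {A : Type*} [CommRing A] {p : ℕ}

theorem weyl_rel (i j : Fin p) :
    Ws A p i * Wt A p j + Wt A p j * Ws A p i = if i = j then 1 else 0 := by
  have := RingQuot.mkAlgHom_rel A (WeylRel.rel (A := A) (p := p) i j)
  simp only [map_add, map_mul, map_one, map_zero] at this
  simpa [Ws, Wt, apply_ite (RingQuot.mkAlgHom A (WeylRel A p))] using this

theorem wt_mul_ws_ne {i j : Fin p} (h : i ≠ j) :
    Wt A p j * Ws A p i = -(Ws A p i * Wt A p j) := by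
  have := weyl_rel (A := A) i j
  rw [if_neg h] at this
  exact eq_neg_of_add_eq_zero_right this

theorem wt_mul_ws_self (i : Fin p) :
    Wt A p i * Ws A p i = 1 - Ws A p i * Wt A p i := by
  have := weyl_rel (A := A) i i
  rw [if_pos rfl] at this
  exact eq_sub_of_add_eq' this

theorem neg_one_pow_central (n : ℕ) (x y : SkewWeyl A p) :
    x * ((-1 : SkewWeyl A p) ^ n * y) = (-1 : SkewWeyl A p) ^ n * (x * y) := by
  rw [← mul_assoc, ((Commute.neg_one_left x).pow_left n).eq.symm, mul_assoc]

theorem W_neg_mul (x y : SkewWeyl A p) : -x * y = -(x * y) := neg_mul x y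
theorem W_mul_neg (x y : SkewWeyl A p) : x * -y = -(x * y) := mul_neg x y
theorem W_neg_one_mul (x : SkewWeyl A p) : -1 * x = -x := neg_one_mul x
theorem W_mul_one (x : SkewWeyl A p) : x * 1 = x := mul_one x
theorem W_one_mul (x : SkewWeyl A p) : 1 * x = x := one_mul x
theorem W_neg_neg (x : SkewWeyl A p) : - -x = x := neg_neg x

theorem wt_mul_sList (i : Fin p) (L : List (Fin p)) (h : ∀ j ∈ L, j ≠ i) :
    Wt A p i * (L.map (Ws A p)).prod
      = (-1) ^ L.length * ((L.map (Ws A p)).prod * Wt A p i) := by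
  induction L with
  | nil => simp
  | cons a L ih =>
    have ha : a ≠ i := h a (by simp)
    have ih' := ih fun j hj => h j (by simp [hj])
    simp only [List.map_cons, List.prod_cons, List.length_cons]
    have e : Wt A p i * (Ws A p a * (List.map (Ws A p) L).prod)
        = -(Ws A p a * (Wt A p i * (List.map (Ws A p) L).prod)) := by
      rw [← mul_assoc, wt_mul_ws_ne ha]; simp only [W_neg_mul, mul_assoc]
    rw [e, ih', neg_one_pow_central, pow_succ]
    simp only [mul_assoc, W_neg_one_mul, W_mul_neg, W_mul_one, W_one_mul, W_neg_mul]

theorem tList_mul_ws (i : Fin p) (L : List (Fin p)) (h : ∀ j ∈ L, j ≠ i) :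
    (L.map (Wt A p)).prod * Ws A p i
      = (-1) ^ L.length * (Ws A p i * (L.map (Wt A p)).prod) := by
  induction L with
  | nil => simp
  | cons a L ih =>
    have ha : a ≠ i := h a (by simp)
    have ih' := ih fun j hj => h j (by simp [hj])
    simp only [List.map_cons, List.prod_cons, List.length_cons]
    rw [mul_assoc, ih', neg_one_pow_central, ← mul_assoc (Wt A p a),
      wt_mul_ws_ne (Ne.symm ha), pow_succ]
    simp only [mul_assoc, W_neg_mul, W_neg_one_mul, W_mul_neg, W_mul_one, W_one_mul, W_neg_mul]

theorem sProd_insert {a : Fin p} {s : Finset (Fin p)} (hlt : ∀ b ∈ s, a < b) (ha : a ∉ s) :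
    sProd A p (insert a s) = Ws A p a * sProd A p s := by
  rw [sProd, Finset.sort_insert _ (fun b hb => (hlt b hb).le) ha]
  simp [sProd]

theorem tProdRev_insert {a : Fin p} {s : Finset (Fin p)} (hlt : ∀ b ∈ s, a < b) (ha : a ∉ s) :
    tProdRev A p (insert a s) = tProdRev A p s * Wt A p a := by
  rw [tProdRev, Finset.sort_insert _ (fun b hb => (hlt b hb).le) ha]
  simp [tProdRev]

theorem skewWeyl_main (I : Finset (Fin p)) :
    tProdRev A p I * sProd A p I =
      ∑ J ∈ I.powerset, (-1 : SkewWeyl A p) ^ J.card * (sProd A p J * tProdRev A p J) := by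
  induction I using Finset.induction_on_min with
  | empty => simp [sProd, tProdRev]
  | insert a s hlt ih =>
    have ha : a ∉ s := fun h => lt_irrefl a (hlt a h)
    have hcard : (s.sort (· ≤ ·)).length = s.card := Finset.length_sort _
    set c : SkewWeyl A p := (-1 : SkewWeyl A p) ^ s.card with hc_def
    set S := sProd A p s
    set T := tProdRev A p s
    have h1 : Wt A p a * S = c * (S * Wt A p a) := by
      rw [hc_def, ← hcard]
      exact wt_mul_sList a _ fun j hj => (hlt j ((Finset.mem_sort _).mp hj)).ne'
    have h2 : T * Ws A p a = c * (Ws A p a * T) := by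
      rw [hc_def, ← hcard, ← List.length_reverse (as := s.sort (· ≤ ·))]
      exact tList_mul_ws a _ fun j hj =>
        (hlt j ((Finset.mem_sort _).mp (List.mem_reverse.mp hj))).ne'
    have hcc : c * c = 1 := by
      rw [hc_def, ← pow_add]
      exact Even.neg_one_pow (α := SkewWeyl A p) ⟨s.card, rfl⟩
    have key : tProdRev A p (insert a s) * sProd A p (insert a s)
        = T * S - Ws A p a * (T * S) * Wt A p a := by
      rw [sProd_insert hlt ha, tProdRev_insert hlt ha]
      have e1 : T * Wt A p a * (Ws A p a * S) = T * (Wt A p a * Ws A p a * S) := by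
        simp only [mul_assoc]
      rw [e1, wt_mul_ws_self, sub_mul, one_mul, mul_sub]
      congr 1
      calc T * (Ws A p a * Wt A p a * S)
          = T * (Ws A p a * (Wt A p a * S)) := by simp only [mul_assoc]
        _ = T * (Ws A p a * (c * (S * Wt A p a))) := by rw [h1]
        _ = c * (T * (Ws A p a * (S * Wt A p a))) := by
            rw [hc_def, neg_one_pow_central, neg_one_pow_central]
        _ = c * (T * Ws A p a * (S * Wt A p a)) := by simp only [mul_assoc]
        _ = c * (c * (Ws A p a * T) * (S * Wt A p a)) := by rw [h2]
        _ = c * c * (Ws A p a * (T * (S * Wt A p a))) := by simp only [mul_assoc]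
        _ = Ws A p a * (T * (S * Wt A p a)) := by rw [hcc, one_mul]
        _ = Ws A p a * (T * S) * Wt A p a := by simp only [mul_assoc]
    rw [ih] at key
    have this2 : Ws A p a *
          (∑ J ∈ s.powerset, (-1 : SkewWeyl A p) ^ J.card * (sProd A p J * tProdRev A p J))
          * Wt A p a
        = - ∑ J ∈ s.powerset, (-1 : SkewWeyl A p) ^ (insert a J).card
            * (sProd A p (insert a J) * tProdRev A p (insert a J)) := by
      rw [Finset.mul_sum, Finset.sum_mul, ← Finset.sum_neg_distrib]
      refine Finset.sum_congr rfl fun J hJ => ?_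
      have hJs : J ⊆ s := Finset.mem_powerset.mp hJ
      have haJ : a ∉ J := fun h => ha (hJs h)
      have hltJ : ∀ b ∈ J, a < b := fun b hb => hlt b (hJs hb)
      rw [sProd_insert hltJ haJ, tProdRev_insert hltJ haJ,
        Finset.card_insert_of_notMem haJ, pow_succ]
      rw [neg_one_pow_central]
      simp only [mul_assoc, W_mul_neg, W_neg_one_mul, W_neg_neg, W_neg_mul, W_mul_one, W_one_mul, W_neg_mul]
    rw [key, Finset.sum_powerset_insert ha, this2, sub_neg_eq_add]

end AuxSection

/-- In `W`, for any monotone subsequence `I` of `(1,…,p)`,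
`t_{I^op} s_I = Σ_{J ⊆ I} (−1)^{|J|} s_J t_{J^op}`. -/
theorem skewWeyl_tProdRev_mul_sProd (A : Type*) [CommRing A] (p : ℕ) (I : Finset (Fin p)) :
    tProdRev A p I * sProd A p I =
      ∑ J ∈ I.powerset, (-1 : SkewWeyl A p) ^ J.card * (sProd A p J * tProdRev A p J) := by
  exact skewWeyl_main I
end

section
/- Let W = A⟨s_1,...,s_p,t_1,...,t_p⟩/(s_i t_j + t_j s_i = δ_{ij}) and let F = {F_i}_{i≥0} be a graded left W-module (s_i raising degree by 1, t_i lowering degree by 1, F_i = 0 for i < 0) with F_0 ≠ 0. Then F_i ≠ 0 for every 0 ≤ i ≤ p. -/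

lemma wrel (A : Type*) [CommRing A] (p : ℕ) (i j : Fin p) :
    Wt A p j * Ws A p i = (if i = j then 1 else 0) - Ws A p i * Wt A p j := by
  have h := RingQuot.mkAlgHom_rel A (WeylRel.rel (A := A) (p := p) i j)
  simp only [map_add, map_mul, apply_ite, map_one, map_zero] at h
  rw [add_comm] at h
  rw [eq_sub_iff_add_eq]
  unfold Ws Wt
  split_ifs at h ⊢ <;> exact h

/-- Let `F = {Fᵢ}_{i ≥ 0}` be a graded left `W`-module (with `sᵢ`
raising and `tᵢ` lowering degrees by one, `Fᵢ = 0` for `i < 0`) over a nonzero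
commutative ring `A`, with `F₀ ≠ 0`.  Then `Fᵢ ≠ 0` for every `0 ≤ i ≤ p`. -/
theorem skewWeyl_graded_module_nonzero_up_to_p
    (A : Type*) [CommRing A] [Nontrivial A] (p : ℕ)
    (M : Type*) [AddCommGroup M] [Module A M] [Module (SkewWeyl A p) M]
    [IsScalarTower A (SkewWeyl A p) M]
    (ℱ : ℤ → Submodule A M) (hInternal : DirectSum.IsInternal ℱ)
    (hneg : ∀ n : ℤ, n < 0 → ℱ n = ⊥)
    (hs : ∀ (i : Fin p) (n : ℤ), ∀ x ∈ ℱ n, Ws A p i • x ∈ ℱ (n + 1))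
    (ht : ∀ (i : Fin p) (n : ℤ), ∀ x ∈ ℱ n, Wt A p i • x ∈ ℱ (n - 1))
    (h0 : ℱ 0 ≠ ⊥) :
    ∀ i : ℕ, i ≤ p → ℱ i ≠ ⊥ := by
  have key : ∀ k : ℕ, k ≤ p → ∃ y : M, y ∈ ℱ (k : ℤ) ∧ y ≠ 0 ∧
      ∀ j : Fin p, k ≤ (j : ℕ) → Wt A p j • y = 0 := by
    intro k
    induction k with
    | zero =>
      intro _
      obtain ⟨x, hx, hx0⟩ := (Submodule.ne_bot_iff _).1 h0
      refine ⟨x, by exact_mod_cast hx, hx0, fun j _ => ?_⟩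
      have h1 := ht j 0 x hx
      rw [hneg (0 - 1) (by norm_num)] at h1
      simpa using h1
    | succ k ih =>
      intro hk
      obtain ⟨y, hy, hy0, hty⟩ := ih (Nat.le_of_succ_le hk)
      set i : Fin p := ⟨k, Nat.lt_of_succ_le hk⟩ with hi
      have hmem : Ws A p i • y ∈ ℱ ((k + 1 : ℕ) : ℤ) := by
        have h2 : ((k + 1 : ℕ) : ℤ) = (k : ℤ) + 1 := by push_cast; ring
        rw [h2]
        exact hs i k y hy
      have hswap : ∀ j : Fin p, Wt A p j • (Ws A p i • y) =
          (if i = j then y else 0) - Ws A p i • (Wt A p j • y) := by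
        intro j
        rw [← mul_smul, wrel A p i j, sub_smul, mul_smul, ite_smul, one_smul, zero_smul]
      have hii : Wt A p i • (Ws A p i • y) = y := by
        rw [hswap i, if_pos rfl, hty i (le_of_eq rfl), smul_zero, sub_zero]
      refine ⟨Ws A p i • y, hmem, ?_, ?_⟩
      · intro h
        apply hy0
        rw [← hii, h, smul_zero]
      · intro j hj
        have hij : i ≠ j := by
          intro h
          rw [← h] at hj
          simp [hi] at hj
        rw [hswap j, if_neg hij, hty j (by omega), smul_zero]
        simp
  intro n hn
  obtain ⟨y, hy, hy0, _⟩ := key n hn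
  exact (Submodule.ne_bot_iff _).2 ⟨y, hy, hy0⟩
end

section
/- Let W = A⟨s_1,...,s_p,t_1,...,t_p⟩/(s_i t_j + t_j s_i = δ_{ij}) and let E = A[s_1,...,s_p] be the exterior algebra on s_1,...,s_p, viewed as a left W-module where t_i acts as the graded derivation with t_i·s_j = δ_{ij}. If F is a graded left W-module with F_i = 0 for i < 0 and for i > p, and F_0 ≠ 0, then the natural map E ⊗_A F_0 → F, s_I ⊗ f ↦ s_I·f, is an isomorphism of graded left W-modules. -/
/-- The `A`-linear map `F₀ → M`, `x ↦ s_I • x`. -/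
noncomputable def sSmulMap (A : Type*) [CommRing A] (p : ℕ)
    (M : Type*) [AddCommGroup M] [Module A M] [Module (SkewWeyl A p) M]
    [IsScalarTower A (SkewWeyl A p) M]
    (N : Submodule A M) (I : Finset (Fin p)) : N →ₗ[A] M where
  toFun x := sProd A p I • (x : M)
  map_add' x y := by simp [smul_add]
  map_smul' a x := by
    simp only [Submodule.coe_smul, RingHom.id_apply]
    rw [← algebraMap_smul (SkewWeyl A p) a (x : M), smul_smul, ← Algebra.commutes,
      ← smul_smul, algebraMap_smul]

namespace SkewAux

variable {A : Type*} [CommRing A] {p : ℕ}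

lemma wrel (i j : Fin p) :
    Ws A p i * Wt A p j + Wt A p j * Ws A p i = if i = j then 1 else 0 := by
  have h := RingQuot.mkAlgHom_rel A (WeylRel.rel (A := A) (p := p) i j)
  simp only [map_add, map_mul] at h
  rw [Ws, Wt, h]
  split <;> simp

variable {M : Type*} [AddCommGroup M] [Module A M] [Module (SkewWeyl A p) M]
  [IsScalarTower A (SkewWeyl A p) M]

lemma st_sum {i j : Fin p} (hij : i ≠ j) (y : M) :
    Ws A p i • Wt A p j • y + Wt A p j • Ws A p i • y = 0 := by
  have h := wrel (A := A) i j
  rw [if_neg hij] at h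
  have h2 := congrArg (· • y) h
  simpa only [add_smul, mul_smul, zero_smul] using h2

lemma st_anti {i j : Fin p} (hij : i ≠ j) (y : M) :
    Ws A p i • Wt A p j • y = -(Wt A p j • Ws A p i • y) :=
  eq_neg_of_add_eq_zero_left (st_sum hij y)

lemma ts_anti {i j : Fin p} (hij : i ≠ j) (y : M) :
    Wt A p j • Ws A p i • y = -(Ws A p i • Wt A p j • y) :=
  eq_neg_of_add_eq_zero_right (st_sum hij y)

lemma st_self (i : Fin p) (y : M) :
    Ws A p i • Wt A p i • y + Wt A p i • Ws A p i • y = y := by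
  have h := wrel (A := A) (p := p) i i
  rw [if_pos rfl] at h
  have h2 := congrArg (· • y) h
  simpa only [add_smul, mul_smul, one_smul] using h2

lemma ts_self (i : Fin p) (y : M) :
    Wt A p i • Ws A p i • y = y - Ws A p i • Wt A p i • y := by
  have := st_self (A := A) (p := p) (M := M) i y; abel_nf; linear_combination (norm := abel) this

/-- Monomial in the `s`'s indexed by a list. -/
noncomputable def slP (A : Type*) [CommRing A] (p : ℕ) (l : List (Fin p)) : SkewWeyl A p :=
  (l.map (Ws A p)).prod

/-- Monomial in the `t`'s, reversed order. -/
noncomputable def tlR (A : Type*) [CommRing A] (p : ℕ) (l : List (Fin p)) : SkewWeyl A p :=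
  ((l.reverse).map (Wt A p)).prod

/-- Monomial in the `t`'s indexed by a list. -/
noncomputable def tlP (A : Type*) [CommRing A] (p : ℕ) (l : List (Fin p)) : SkewWeyl A p :=
  (l.map (Wt A p)).prod

/-- Monomial in the `s`'s, reversed order. -/
noncomputable def slR (A : Type*) [CommRing A] (p : ℕ) (l : List (Fin p)) : SkewWeyl A p :=
  ((l.reverse).map (Ws A p)).prod

@[simp] lemma slP_nil : slP A p [] = 1 := rfl
@[simp] lemma tlP_nil : tlP A p [] = 1 := rfl
@[simp] lemma tlR_nil : tlR A p [] = 1 := rfl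
@[simp] lemma slR_nil : slR A p [] = 1 := rfl

lemma slP_cons (a : Fin p) (l : List (Fin p)) : slP A p (a :: l) = Ws A p a * slP A p l := by
  simp [slP]

lemma tlP_cons (a : Fin p) (l : List (Fin p)) : tlP A p (a :: l) = Wt A p a * tlP A p l := by
  simp [tlP]

lemma tlR_cons (a : Fin p) (l : List (Fin p)) : tlR A p (a :: l) = tlR A p l * Wt A p a := by
  simp [tlR]

lemma slR_cons (a : Fin p) (l : List (Fin p)) : slR A p (a :: l) = slR A p l * Ws A p a := by
  simp [slR]

lemma sProd_eq (I : Finset (Fin p)) : sProd A p I = slP A p (I.sort (· ≤ ·)) := rfl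
lemma tProdRev_eq (I : Finset (Fin p)) : tProdRev A p I = tlR A p (I.sort (· ≤ ·)) := rfl

/-- `t_i` kills `s_l • x` if `i ∉ l` and `t_i x = 0`. -/
lemma lemA {i : Fin p} {x : M} (hx : Wt A p i • x = 0) :
    ∀ l : List (Fin p), i ∉ l → Wt A p i • slP A p l • x = 0 := by
  intro l
  induction l with
  | nil => simpa using hx
  | cons a l ih =>
    intro hmem
    have hia : i ≠ a := fun h => hmem (h ▸ List.mem_cons_self)
    rw [slP_cons, mul_smul, ts_anti hia.symm, ih (fun h => hmem (List.mem_cons_of_mem a h))]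
    simp

/-- dual: `s_i` kills `t_l • x` if `i ∉ l` and `s_i x = 0`. -/
lemma lemA' {i : Fin p} {x : M} (hx : Ws A p i • x = 0) :
    ∀ l : List (Fin p), i ∉ l → Ws A p i • tlP A p l • x = 0 := by
  intro l
  induction l with
  | nil => simpa using hx
  | cons a l ih =>
    intro hmem
    have hia : i ≠ a := fun h => hmem (h ▸ List.mem_cons_self)
    rw [tlP_cons, mul_smul, st_anti hia, ih (fun h => hmem (List.mem_cons_of_mem a h))]
    simp

/-- stripping: `t_{l,rev} • s_l • x = x` if `l` has no duplicates and all `t_i x = 0`. -/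
lemma stripAll {x : M} (hx : ∀ i, Wt A p i • x = 0) :
    ∀ l : List (Fin p), l.Nodup → tlR A p l • slP A p l • x = x := by
  intro l
  induction l with
  | nil => simp
  | cons a l ih =>
    intro hnd
    rw [tlR_cons, slP_cons, mul_smul, mul_smul, ts_self,
      lemA (hx a) l (by simpa using (List.nodup_cons.mp hnd).1), smul_zero, sub_zero,
      ih (List.nodup_cons.mp hnd).2]

lemma stripAll' {x : M} (hx : ∀ i, Ws A p i • x = 0) :
    ∀ l : List (Fin p), l.Nodup → slR A p l • tlP A p l • x = x := by
  intro l
  induction l with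
  | nil => simp
  | cons a l ih =>
    intro hnd
    have h1 : Ws A p a • Wt A p a • tlP A p l • x
        = tlP A p l • x - Wt A p a • Ws A p a • tlP A p l • x := by
      have := st_self (A := A) (p := p) a (tlP A p l • x)
      linear_combination (norm := abel) this
    rw [slR_cons, tlP_cons, mul_smul, mul_smul, h1,
      lemA' (hx a) l (by simpa using (List.nodup_cons.mp hnd).1), smul_zero, sub_zero,
      ih (List.nodup_cons.mp hnd).2]


section Graded

variable (ℱ : ℤ → Submodule A M)
variable (hconc : ∀ n : ℤ, (n < 0 ∨ (p : ℤ) < n) → ℱ n = ⊥)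
variable (hs : ∀ (i : Fin p) (n : ℤ), ∀ x ∈ ℱ n, Ws A p i • x ∈ ℱ (n + 1))
variable (ht : ∀ (i : Fin p) (n : ℤ), ∀ x ∈ ℱ n, Wt A p i • x ∈ ℱ (n - 1))

include hs in
lemma slP_mem {n : ℤ} : ∀ (l : List (Fin p)) {x : M}, x ∈ ℱ n →
    slP A p l • x ∈ ℱ (n + l.length) := by
  intro l
  induction l with
  | nil => intro x hx; simpa using hx
  | cons a l ih =>
    intro x hx
    rw [slP_cons, mul_smul]
    have := hs a _ _ (ih hx)
    convert this using 2
    simp; ring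

include ht in
lemma tlP_mem {n : ℤ} : ∀ (l : List (Fin p)) {x : M}, x ∈ ℱ n →
    tlP A p l • x ∈ ℱ (n - l.length) := by
  intro l
  induction l with
  | nil => intro x hx; simpa using hx
  | cons a l ih =>
    intro x hx
    rw [tlP_cons, mul_smul]
    have := ht a _ _ (ih hx)
    convert this using 2
    simp; ring

include hconc hs in
/-- Claim 1: in positive degree, an element killed by all `t`'s is zero. -/
lemma kerT {n : ℤ} (hn : 1 ≤ n) {x : M} (hx : x ∈ ℱ n)
    (hk : ∀ i, Wt A p i • x = 0) : x = 0 := by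
  by_cases hnp : (p : ℤ) < n
  · have := hconc n (Or.inr hnp) ▸ hx
    simpa using this
  · push_neg at hnp
    -- choose J of card p + 1 - n
    obtain ⟨J, -, hJcard⟩ := Finset.exists_subset_card_eq
      (s := (Finset.univ : Finset (Fin p))) (n := p + 1 - n.toNat) (by simp; omega)
    set l := J.sort (· ≤ ·) with hl
    have hlen : (l.length : ℤ) = (p : ℤ) + 1 - n := by
      rw [hl, Finset.length_sort, hJcard]
      omega
    have h1 : slP A p l • x ∈ ℱ (n + l.length) := slP_mem ℱ hs l hx
    have h2 : ℱ (n + l.length) = ⊥ := by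
      apply hconc; right; omega
    have h3 : slP A p l • x = 0 := by
      rw [h2] at h1; simpa using h1
    have h4 := stripAll hk l (Finset.sort_nodup _ _)
    rw [h3, smul_zero] at h4
    exact h4.symm

include hconc ht in
/-- Claim 1': in degree at most `p - 1`, an element killed by all `s`'s is zero. -/
lemma kerS {n : ℤ} (hn : n ≤ (p : ℤ) - 1) {x : M} (hx : x ∈ ℱ n)
    (hk : ∀ i, Ws A p i • x = 0) : x = 0 := by
  by_cases hnp : n < 0
  · have := hconc n (Or.inl hnp) ▸ hx
    simpa using this
  · push_neg at hnp
    obtain ⟨J, -, hJcard⟩ := Finset.exists_subset_card_eq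
      (s := (Finset.univ : Finset (Fin p))) (n := n.toNat + 1) (by simp; omega)
    set l := J.sort (· ≤ ·) with hl
    have hlen : (l.length : ℤ) = n + 1 := by
      rw [hl, Finset.length_sort, hJcard]; omega
    have h1 : tlP A p l • x ∈ ℱ (n - l.length) := tlP_mem ℱ ht l hx
    have h2 : ℱ (n - l.length) = ⊥ := by
      apply hconc; left; omega
    have h3 : tlP A p l • x = 0 := by
      rw [h2] at h1; simpa using h1
    have h4 := stripAll' hk l (Finset.sort_nodup _ _)
    rw [h3, smul_zero] at h4
    exact h4.symm

include hconc hs ht in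
/-- Operators of degree `-2` commuting with the `s`'s vanish. -/
lemma vanish_t (hTop : iSup ℱ = ⊤) (V : M → M) (hV0 : V 0 = 0)
    (hadd : ∀ a b : M, V (a + b) = V a + V b)
    (hcomm : ∀ (k : Fin p) (y : M), Ws A p k • V y = V (Ws A p k • y))
    (hdeg : ∀ (n : ℤ), ∀ x ∈ ℱ n, V x ∈ ℱ (n - 2)) :
    ∀ y : M, V y = 0 := by
  have key : ∀ (m : ℕ) (n : ℤ), (p : ℤ) + 1 - m ≤ n → ∀ x ∈ ℱ n, V x = 0 := by
    intro m
    induction m with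
    | zero =>
      intro n hn x hx
      have : x = 0 := by
        have h := hconc n (Or.inr (by omega)) ▸ hx
        simpa using h
      rw [this, hV0]
    | succ m ih =>
      intro n hn x hx
      by_cases hc : (p : ℤ) < n
      · have : x = 0 := by
          have h := hconc n (Or.inr hc) ▸ hx
          simpa using h
        rw [this, hV0]
      · refine kerS ℱ hconc ht (n := n - 2) (by omega) (hdeg n x hx) ?_
        intro k
        rw [hcomm]
        exact ih (n + 1) (by omega) _ (hs k n x hx)
  have keyAll : ∀ (n : ℤ), ∀ x ∈ ℱ n, V x = 0 := by
    intro n x hx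
    by_cases hneg : n < 0
    · have : x = 0 := by
        have h := hconc n (Or.inl hneg) ▸ hx
        simpa using h
      rw [this, hV0]
    · exact key (p + 1) n (by omega) x hx
  intro y
  have hy : y ∈ ⨆ n, ℱ n := by rw [hTop]; trivial
  exact Submodule.iSup_induction (motive := fun z => V z = 0) ℱ hy keyAll hV0
    (fun a b ha hb => by show V (a+b) = 0; rw [hadd, ha, hb, add_zero])

include hconc hs ht in
/-- Operators of degree `+2` commuting with the `t`'s vanish. -/
lemma vanish_s (hTop : iSup ℱ = ⊤) (V : M → M) (hV0 : V 0 = 0)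
    (hadd : ∀ a b : M, V (a + b) = V a + V b)
    (hcomm : ∀ (k : Fin p) (y : M), Wt A p k • V y = V (Wt A p k • y))
    (hdeg : ∀ (n : ℤ), ∀ x ∈ ℱ n, V x ∈ ℱ (n + 2)) :
    ∀ y : M, V y = 0 := by
  have key : ∀ (m : ℕ) (n : ℤ), n ≤ (m : ℤ) - 1 → ∀ x ∈ ℱ n, V x = 0 := by
    intro m
    induction m with
    | zero =>
      intro n hn x hx
      have : x = 0 := by
        have h := hconc n (Or.inl (by omega)) ▸ hx
        simpa using h
      rw [this, hV0]
    | succ m ih =>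
      intro n hn x hx
      by_cases hc : n < 0
      · have : x = 0 := by
          have h := hconc n (Or.inl hc) ▸ hx
          simpa using h
        rw [this, hV0]
      · refine kerT ℱ hconc hs (n := n + 2) (by omega) (hdeg n x hx) ?_
        intro k
        rw [hcomm]
        exact ih (n - 1) (by omega) _ (ht k n x hx)
  have keyAll : ∀ (n : ℤ), ∀ x ∈ ℱ n, V x = 0 := by
    intro n x hx
    exact key (n.toNat + 1) n (by omega) x hx
  intro y
  have hy : y ∈ ⨆ n, ℱ n := by rw [hTop]; trivial
  exact Submodule.iSup_induction (motive := fun z => V z = 0) ℱ hy keyAll hV0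
    (fun a b ha hb => by show V (a+b) = 0; rw [hadd, ha, hb, add_zero])

end Graded

lemma st_self' (i : Fin p) (z : M) :
    Ws A p i • Wt A p i • z = z - Wt A p i • Ws A p i • z := by
  have := st_self (A := A) (p := p) i z
  linear_combination (norm := abel) this

lemma st_gen (k m : Fin p) (z : M) :
    Ws A p k • Wt A p m • z = (if k = m then z else 0) - Wt A p m • Ws A p k • z := by
  by_cases h : k = m
  · subst h; simpa using st_self' k z
  · simp [h, st_anti h]

lemma ts_gen (k m : Fin p) (z : M) :
    Wt A p m • Ws A p k • z = (if k = m then z else 0) - Ws A p k • Wt A p m • z := by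
  by_cases h : k = m
  · subst h
    have := st_self (A := A) (p := p) k z
    rw [if_pos rfl]
    linear_combination (norm := abel) this
  · simp [h, ts_anti h]

section Global

variable (ℱ : ℤ → Submodule A M)
variable (hconc : ∀ n : ℤ, (n < 0 ∨ (p : ℤ) < n) → ℱ n = ⊥)
variable (hs : ∀ (i : Fin p) (n : ℤ), ∀ x ∈ ℱ n, Ws A p i • x ∈ ℱ (n + 1))
variable (ht : ∀ (i : Fin p) (n : ℤ), ∀ x ∈ ℱ n, Wt A p i • x ∈ ℱ (n - 1))
variable (hTop : iSup ℱ = ⊤)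

include hconc hs ht hTop

lemma gTsq (i : Fin p) (y : M) : Wt A p i • Wt A p i • y = 0 := by
  refine vanish_t ℱ hconc hs ht hTop (fun z => Wt A p i • Wt A p i • z) (by simp)
    (fun a b => by simp [smul_add]) ?_ ?_ y
  · intro k z
    rw [st_gen, st_gen, smul_sub]
    by_cases h : k = i <;> simp [h] <;> abel
  · intro n x hx
    have h1 := ht i n x hx
    have h2 := ht i (n - 1) _ h1
    convert h2 using 2
    ring

lemma gTac {i j : Fin p} (hij : i ≠ j) (y : M) :
    Wt A p i • Wt A p j • y = -(Wt A p j • Wt A p i • y) := by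
  have key : ∀ z : M, Wt A p i • Wt A p j • z + Wt A p j • Wt A p i • z = 0 := by
    refine vanish_t ℱ hconc hs ht hTop
      (fun z => Wt A p i • Wt A p j • z + Wt A p j • Wt A p i • z) (by simp)
      (fun a b => by simp [smul_add]; abel) ?_ ?_
    · intro k z
      rw [smul_add, st_gen, st_gen, st_gen, st_gen, smul_sub, smul_sub]
      by_cases h1 : k = i <;> by_cases h2 : k = j <;> simp [h1, h2] <;> abel
    · intro n x hx
      have h2 : Wt A p i • Wt A p j • x ∈ ℱ (n - 2) := by
        have := ht i (n - 1) _ (ht j n x hx)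
        convert this using 2; ring
      have h3 : Wt A p j • Wt A p i • x ∈ ℱ (n - 2) := by
        have := ht j (n - 1) _ (ht i n x hx)
        convert this using 2; ring
      exact Submodule.add_mem _ h2 h3
  exact eq_neg_of_add_eq_zero_left (key y)

lemma gSsq (i : Fin p) (y : M) : Ws A p i • Ws A p i • y = 0 := by
  refine vanish_s ℱ hconc hs ht hTop (fun z => Ws A p i • Ws A p i • z) (by simp)
    (fun a b => by simp [smul_add]) ?_ ?_ y
  · intro k z
    rw [ts_gen, ts_gen, smul_sub]
    by_cases h : i = k <;> simp [h] <;> abel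
  · intro n x hx
    have h1 := hs i n x hx
    have h2 := hs i (n + 1) _ h1
    convert h2 using 2
    ring

lemma gSac {i j : Fin p} (hij : i ≠ j) (y : M) :
    Ws A p i • Ws A p j • y = -(Ws A p j • Ws A p i • y) := by
  have key : ∀ z : M, Ws A p i • Ws A p j • z + Ws A p j • Ws A p i • z = 0 := by
    refine vanish_s ℱ hconc hs ht hTop
      (fun z => Ws A p i • Ws A p j • z + Ws A p j • Ws A p i • z) (by simp)
      (fun a b => by simp [smul_add]; abel) ?_ ?_
    · intro k z
      rw [smul_add, ts_gen, ts_gen, ts_gen, ts_gen, smul_sub, smul_sub]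
      by_cases h1 : i = k <;> by_cases h2 : j = k <;> simp [h1, h2] <;> abel
    · intro n x hx
      have h2 : Ws A p i • Ws A p j • x ∈ ℱ (n + 2) := by
        have := hs i (n + 1) _ (hs j n x hx)
        convert this using 2; ring
      have h3 : Ws A p j • Ws A p i • x ∈ ℱ (n + 2) := by
        have := hs j (n + 1) _ (hs i n x hx)
        convert this using 2; ring
      exact Submodule.add_mem _ h2 h3
  exact eq_neg_of_add_eq_zero_left (key y)

end Global

/-- contraction with sign (disjunctive form). -/
lemma lemB {x : M} (hx : ∀ i, Wt A p i • x = 0) :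
    ∀ (l : List (Fin p)) (i : Fin p), l.Nodup → i ∈ l →
      Wt A p i • slP A p l • x = slP A p (l.erase i) • x ∨
      Wt A p i • slP A p l • x = -(slP A p (l.erase i) • x) := by
  intro l
  induction l with
  | nil => intro i _ h; simp at h
  | cons a l ih =>
    intro i hnd hmem
    by_cases hia : i = a
    · subst hia
      left
      rw [List.erase_cons_head, slP_cons, mul_smul, ts_self,
        lemA (hx i) l (by simpa using (List.nodup_cons.mp hnd).1), smul_zero, sub_zero]
    · have hil : i ∈ l := by
        rcases List.mem_cons.mp hmem with h | h
        · exact absurd h hia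
        · exact h
      have herase : (a :: l).erase i = a :: l.erase i :=
        List.erase_cons_tail (by simp [Ne.symm hia])
      rw [herase, slP_cons, slP_cons, mul_smul, mul_smul,
        ts_anti (fun h => hia h.symm)]
      rcases ih i (List.nodup_cons.mp hnd).2 hil with h | h
      · right; rw [h]
      · left; rw [h]; simp

/-- killing: if some element of `l₁` is not in `l₂`, full contraction vanishes. -/
lemma killAll {x : M} (hx : ∀ i, Wt A p i • x = 0) :
    ∀ (l₁ l₂ : List (Fin p)), l₂.Nodup → (∃ b ∈ l₁, b ∉ l₂) →
      tlR A p l₁ • slP A p l₂ • x = 0 := by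
  intro l₁
  induction l₁ with
  | nil => rintro l₂ _ ⟨b, hb, -⟩; simp at hb
  | cons a l₁ ih =>
    rintro l₂ hnd ⟨b, hb, hbn⟩
    rw [tlR_cons, mul_smul]
    by_cases ha : a ∈ l₂
    · have hba : b ≠ a := fun h => hbn (h ▸ ha)
      have hbl : b ∈ l₁ := by
        rcases List.mem_cons.mp hb with h | h
        · exact absurd h hba
        · exact h
      have hbn' : b ∉ l₂.erase a := fun h => hbn (List.mem_of_mem_erase h)
      rcases lemB hx l₂ a hnd ha with h | h
      · rw [h]; exact ih _ (hnd.erase a) ⟨b, hbl, hbn'⟩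
      · rw [h, smul_neg, ih _ (hnd.erase a) ⟨b, hbl, hbn'⟩, neg_zero]
    · rw [lemA (hx a) l₂ ha, smul_zero]


lemma wsmul_comm (w : SkewWeyl A p) (a : A) (z : M) : w • a • z = a • w • z := by
  rw [← algebraMap_smul (SkewWeyl A p) a z, smul_smul, ← Algebra.commutes,
    ← smul_smul, algebraMap_smul]

lemma sort_insert_eq {i : Fin p} {I : Finset (Fin p)} (h : i ∉ I) :
    (insert i I).sort (· ≤ ·) = (I.sort (· ≤ ·)).orderedInsert (· ≤ ·) i := by
  refine List.Perm.eq_of_pairwise' (Finset.pairwise_sort _ _)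
    ((Finset.pairwise_sort _ _).orderedInsert i _) ?_
  refine List.Perm.trans ?_ (List.perm_orderedInsert _ i _).symm
  have hco : ((insert i I).sort (· ≤ ·) : Multiset (Fin p)) = ↑(i :: I.sort (· ≤ ·)) := by
    rw [Finset.sort_eq, Finset.insert_val_of_notMem h, ← Multiset.cons_coe, Finset.sort_eq]
  exact Multiset.coe_eq_coe.mp hco

lemma sInsert (hssq : ∀ (i : Fin p) (y : M), Ws A p i • Ws A p i • y = 0)
    (hsac : ∀ {i j : Fin p}, i ≠ j → ∀ y : M,
      Ws A p i • Ws A p j • y = -(Ws A p j • Ws A p i • y)) :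
    ∀ (l : List (Fin p)), l.Pairwise (· < ·) → ∀ (i : Fin p) (x : M),
      (i ∈ l ∧ Ws A p i • slP A p l • x = 0) ∨
      (i ∉ l ∧ (Ws A p i • slP A p l • x = slP A p (l.orderedInsert (· ≤ ·) i) • x ∨
                Ws A p i • slP A p l • x = -(slP A p (l.orderedInsert (· ≤ ·) i) • x))) := by
  intro l
  induction l with
  | nil =>
    intro _ i x
    right
    refine ⟨by simp, Or.inl ?_⟩
    simp only [List.orderedInsert, slP_nil, one_smul, slP_cons, mul_smul]
  | cons j l ih =>
    intro hsort i x
    have hjl := (List.pairwise_cons.mp hsort).1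
    have hl := (List.pairwise_cons.mp hsort).2
    rcases lt_trichotomy i j with hij | hij | hij
    · right
      have hmem : i ∉ j :: l := by
        intro hm
        rcases List.mem_cons.mp hm with h | h
        · exact absurd h (ne_of_lt hij)
        · exact absurd hij (not_lt.mpr (le_of_lt (hjl i h)))
      refine ⟨hmem, Or.inl ?_⟩
      have hoi : List.orderedInsert (· ≤ ·) i (j :: l) = i :: j :: l := by
        simp [List.orderedInsert, le_of_lt hij]
      rw [hoi]
      simp only [slP_cons, mul_smul]
    · subst hij
      left
      refine ⟨List.mem_cons_self, ?_⟩
      rw [slP_cons, mul_smul, hssq]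
    · have hne : i ≠ j := ne_of_gt hij
      have hins : (j :: l).orderedInsert (· ≤ ·) i = j :: l.orderedInsert (· ≤ ·) i := by
        simp [List.orderedInsert, not_le.mpr hij]
      have step : Ws A p i • slP A p (j :: l) • x
          = -(Ws A p j • Ws A p i • slP A p l • x) := by
        rw [slP_cons, mul_smul, hsac hne]
      rcases ih hl i x with ⟨hmem, h0⟩ | ⟨hmem, heq | heq⟩
      · left
        exact ⟨List.mem_cons_of_mem j hmem, by rw [step, h0, smul_zero, neg_zero]⟩
      · right
        refine ⟨by simp [hne, hmem], Or.inr ?_⟩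
        rw [step, heq, hins]
        simp only [slP_cons, mul_smul, smul_neg, neg_neg]
      · right
        refine ⟨by simp [hne, hmem], Or.inl ?_⟩
        rw [step, heq, hins]
        simp only [slP_cons, mul_smul, smul_neg, neg_neg]

end SkewAux


open SkewAux

/-- Let `F` be a graded left `W`-module concentrated in degrees
`0,…,p` with `F₀ ≠ 0`.  Identifying `E ⊗_A F₀` (where `E = Λ(s₁,…,s_p)` is the exterior
algebra, a left `W`-module) with `⨁_{I ⊆ [p]} F₀` via the basis `{s_I}`, the natural map
`E ⊗_A F₀ → F`, `s_I ⊗ f ↦ s_I • f`, is an isomorphism of graded left `W`-modules: it is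
bijective and sends the summand indexed by `I` into the graded piece of degree `|I|`
(`W`-equivariance holds by construction of the `W`-action on `E`). -/
theorem skewWeyl_structure_iso
    (A : Type*) [CommRing A] (p : ℕ)
    (M : Type*) [AddCommGroup M] [Module A M] [Module (SkewWeyl A p) M]
    [IsScalarTower A (SkewWeyl A p) M]
    (ℱ : ℤ → Submodule A M) (hInternal : DirectSum.IsInternal ℱ)
    (hconc : ∀ n : ℤ, (n < 0 ∨ (p : ℤ) < n) → ℱ n = ⊥)
    (hs : ∀ (i : Fin p) (n : ℤ), ∀ x ∈ ℱ n, Ws A p i • x ∈ ℱ (n + 1))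
    (ht : ∀ (i : Fin p) (n : ℤ), ∀ x ∈ ℱ n, Wt A p i • x ∈ ℱ (n - 1))
    (h0 : ℱ 0 ≠ ⊥) :
    Function.Bijective
      (DirectSum.toModule A (Finset (Fin p)) M (fun I => sSmulMap A p M (ℱ 0) I)) ∧
    ∀ (I : Finset (Fin p)) (x : ℱ 0), sProd A p I • (x : M) ∈ ℱ (I.card : ℤ) := by
  classical
  have hTop : iSup ℱ = ⊤ := hInternal.submodule_iSup_eq_top
  -- elements of F₀ are killed by all t's
  have hkill : ∀ f : M, f ∈ ℱ 0 → ∀ k, Wt A p k • f = 0 := by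
    intro f hf k
    have h1 := ht k 0 f hf
    rw [hconc ((0:ℤ) - 1) (Or.inl (by norm_num))] at h1
    simpa using h1
  -- grading statement
  have hgrade : ∀ (I : Finset (Fin p)) (x : ℱ 0), sProd A p I • (x : M) ∈ ℱ (I.card : ℤ) := by
    intro I x
    have h1 := slP_mem ℱ hs (I.sort (· ≤ ·)) x.2
    rw [sProd_eq]
    simpa [Finset.length_sort] using h1
  set Φ := DirectSum.toModule A (Finset (Fin p)) M (fun I => sSmulMap A p M (ℱ 0) I) with hΦ
  -- expansion of Φ v as a sum
  have hsum : ∀ v : DirectSum (Finset (Fin p)) (fun _ => ↥(ℱ 0)),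
      Φ v = ∑ J ∈ DFinsupp.support v, sProd A p J • ((v J : M)) := by
    intro v
    conv_lhs => rw [← DirectSum.sum_support_of v]
    rw [map_sum]
    refine Finset.sum_congr rfl fun J _ => ?_
    rw [hΦ, ← DirectSum.lof_eq_of A, DirectSum.toModule_lof]
    rfl
  -- injectivity
  have hinj : Function.Injective Φ := by
    rw [← LinearMap.ker_eq_bot]
    rw [LinearMap.ker_eq_bot']
    intro v hv
    have key : ∀ I : Finset (Fin p), (∀ J, I ⊂ J → v J = 0) → v I = 0 := by
      intro I hI
      by_cases hIs : I ∈ DFinsupp.support v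
      · have h2 : tProdRev A p I • Φ v
            = ∑ J ∈ DFinsupp.support v, tProdRev A p I • (sProd A p J • ((v J : M))) := by
          rw [hsum v, Finset.smul_sum]
        have h3 : ∀ J ∈ DFinsupp.support v, J ≠ I →
            tProdRev A p I • (sProd A p J • ((v J : M))) = 0 := by
          intro J _ hne
          by_cases hsub : I ⊆ J
          · rw [hI J (HasSubset.Subset.ssubset_of_ne hsub hne.symm)]
            simp
          · obtain ⟨b, hbI, hbJ⟩ := Finset.not_subset.mp hsub
            exact killAll (hkill _ (v J).2) _ _ (Finset.sort_nodup _ _)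
              ⟨b, (Finset.mem_sort _).mpr hbI, fun hc => hbJ ((Finset.mem_sort _).mp hc)⟩
        have h4 : tProdRev A p I • Φ v = tProdRev A p I • (sProd A p I • ((v I : M))) := by
          rw [h2]
          exact Finset.sum_eq_single_of_mem I hIs h3
        have h5 : tProdRev A p I • (sProd A p I • ((v I : M))) = (v I : M) :=
          stripAll (hkill _ (v I).2) _ (Finset.sort_nodup _ _)
        have h6 : (v I : M) = 0 := by
          rw [← h5, ← h4, hv, smul_zero]
        exact Subtype.ext h6
      · exact DFinsupp.notMem_support_iff.mp hIs
    have main : ∀ (m : ℕ) (I : Finset (Fin p)), p ≤ I.card + m → v I = 0 := by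
      intro m
      induction m with
      | zero =>
        intro I hI
        refine key I fun J hJ => absurd (Finset.card_lt_card hJ) ?_
        have h1 : J.card ≤ p := by simpa using Finset.card_le_univ J
        omega
      | succ m ih =>
        intro I hI
        refine key I fun J hJ => ih J ?_
        have := Finset.card_lt_card hJ
        omega
    refine DFinsupp.ext fun I => ?_
    simp [main p I (by omega)]
  -- global relations
  have hssq := gSsq ℱ hconc hs ht hTop
  have hsac : ∀ {i j : Fin p}, i ≠ j → ∀ y : M,
      Ws A p i • Ws A p j • y = -(Ws A p j • Ws A p i • y) :=
    fun hij y => gSac ℱ hconc hs ht hTop hij y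
  have htsq := gTsq ℱ hconc hs ht hTop
  have htac : ∀ {i j : Fin p}, i ≠ j → ∀ y : M,
      Wt A p i • Wt A p j • y = -(Wt A p j • Wt A p i • y) :=
    fun hij y => gTac ℱ hconc hs ht hTop hij y
  -- the span of the s-monomial translates of F₀
  set G : Submodule A M :=
    Submodule.span A {z : M | ∃ (I : Finset (Fin p)) (f : M), f ∈ ℱ 0 ∧ z = sProd A p I • f}
    with hG
  have smulG : ∀ (i : Fin p), ∀ z ∈ G, Ws A p i • z ∈ G := by
    intro i z hz
    induction hz using Submodule.span_induction with
    | mem w hw =>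
      obtain ⟨I, f, hf, rfl⟩ := hw
      rcases sInsert hssq (fun h y => hsac h y) (I.sort (· ≤ ·)) (Finset.sortedLT_sort I).pairwise i f
        with ⟨hmem, h0'⟩ | ⟨hmem, heq | heq⟩
      · rw [sProd_eq, h0']; exact Submodule.zero_mem G
      · rw [sProd_eq, heq, ← sort_insert_eq (fun hc => hmem ((Finset.mem_sort _).mpr hc)),
          ← sProd_eq]
        exact Submodule.subset_span ⟨_, f, hf, rfl⟩
      · rw [sProd_eq, heq, ← sort_insert_eq (fun hc => hmem ((Finset.mem_sort _).mpr hc)),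
          ← sProd_eq]
        exact Submodule.neg_mem G (Submodule.subset_span ⟨_, f, hf, rfl⟩)
    | zero => rw [smul_zero]; exact Submodule.zero_mem G
    | add a b _ _ ha hb => rw [smul_add]; exact Submodule.add_mem G ha hb
    | smul a w _ hw => rw [wsmul_comm]; exact Submodule.smul_mem G a hw
  have mem0 : ∀ f ∈ ℱ 0, f ∈ G := by
    intro f hf
    have h1 : f = sProd A p (∅ : Finset (Fin p)) • f := by
      simp [sProd]
    rw [h1]
    exact Submodule.subset_span ⟨∅, f, hf, rfl⟩
  -- generation
  have main : ∀ (m : ℕ) (n : ℤ), n ≤ m → ℱ n ≤ G := by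
    intro m
    induction m with
    | zero =>
      intro n hn x hx
      rcases lt_or_eq_of_le hn with h | h
      · have := hconc n (Or.inl (by exact_mod_cast h)) ▸ hx
        simpa using (this : x ∈ (⊥ : Submodule A M)) ▸ Submodule.zero_mem G
      · subst h
        exact mem0 x (by exact_mod_cast hx)
    | succ m ih =>
      intro n hn x hx
      by_cases hnm : n ≤ m
      · exact ih n hnm hx
      · have hn1 : 1 ≤ n := by omega
        set f : M → Fin p → M := fun y i => Wt A p i • Ws A p i • y with hf
        have hstep : ∀ (y : M), y ∈ ℱ n → ∀ i, f y i ∈ ℱ n := by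
          intro y hy i
          have := ht i (n + 1) _ (hs i n y hy)
          convert this using 2
          ring
        have hmemf : ∀ (l : List (Fin p)) (y : M), y ∈ ℱ n → l.foldl f y ∈ ℱ n := by
          intro l
          induction l with
          | nil => intro y hy; exact hy
          | cons a l ihl => intro y hy; exact ihl _ (hstep y hy a)
        have hsubf : ∀ (l : List (Fin p)) (y : M), y ∈ ℱ n → y - l.foldl f y ∈ G := by
          intro l
          induction l with
          | nil => intro y hy; simpa using Submodule.zero_mem G
          | cons a l ihl =>
            intro y hy
            have h1 : y - (a :: l).foldl f y = (y - f y a) + (f y a - l.foldl f (f y a)) := by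
              rw [List.foldl_cons]; abel
            rw [h1]
            refine Submodule.add_mem G ?_ (ihl _ (hstep y hy a))
            have h2 : y - f y a = Ws A p a • Wt A p a • y := by
              rw [hf]
              rw [sub_eq_iff_eq_add]
              exact (st_self (A := A) (p := p) a y).symm
            rw [h2]
            exact smulG a _ (ih (n - 1) (by omega) (ht a n y hy))
        have hpres : ∀ (l : List (Fin p)) (y : M) (k : Fin p),
            Wt A p k • y = 0 → Wt A p k • l.foldl f y = 0 := by
          intro l
          induction l with
          | nil => intro y k hk; exact hk
          | cons b l ihl =>
            intro y k hk
            refine ihl _ k ?_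
            by_cases hkb : k = b
            · subst hkb; exact htsq k _
            · rw [hf]
              show Wt A p k • Wt A p b • Ws A p b • y = 0
              rw [htac hkb, ts_anti (Ne.symm hkb), smul_neg, neg_neg, ← mul_smul, ← mul_smul]
              rw [mul_smul, mul_smul, hk, smul_zero, smul_zero]
        have hcover : ∀ (l : List (Fin p)) (y : M) (k : Fin p), k ∈ l →
            Wt A p k • l.foldl f y = 0 := by
          intro l
          induction l with
          | nil => intro y k hk; simp at hk
          | cons b l ihl =>
            intro y k hk
            by_cases hkl : k ∈ l
            · exact ihl _ k hkl
            · have hkb : k = b := by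
                rcases List.mem_cons.mp hk with h | h
                · exact h
                · exact absurd h hkl
              subst hkb
              exact hpres l _ k (htsq k _)
        have hz : (List.finRange p).foldl f x = 0 :=
          kerT ℱ hconc hs hn1 (hmemf _ x hx) fun k => hcover _ x k (List.mem_finRange k)
        have h3 := hsubf (List.finRange p) x hx
        rw [hz, sub_zero] at h3
        exact h3
  -- surjectivity
  have hrange : G ≤ LinearMap.range Φ := by
    rw [hG]
    refine Submodule.span_le.mpr ?_
    rintro z ⟨I, f, hf, rfl⟩
    exact ⟨DirectSum.lof A _ _ I ⟨f, hf⟩, by rw [hΦ, DirectSum.toModule_lof]; rfl⟩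
  have hsurj : Function.Surjective Φ := by
    intro y
    have hy : y ∈ G := by
      have h1 : y ∈ ⨆ n, ℱ n := by rw [hTop]; trivial
      exact Submodule.iSup_induction (motive := fun z => z ∈ G) ℱ h1
        (fun n x hx => main n.toNat n (by omega) hx)
        (Submodule.zero_mem G) (fun a b ha hb => Submodule.add_mem G ha hb)
    obtain ⟨v, hv⟩ := hrange hy
    exact ⟨v, hv⟩
  exact ⟨⟨hinj, hsurj⟩, hgrade⟩
end
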